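/- Let A, B ∈ M_N(ℂ). Then Σ_{k=1}^N |σ_k(A) − σ_k(B)| ≤ √( N · tr((A−B)(A−B)*) ). -/

import Mathlib

open Matrix
/-- The decreasingly ordered eigenvalues of the Hermitian matrix `A * Aᴴ`. -/
noncomputable def evalsDesc {N : ℕ} (A : Matrix (Fin N) (Fin N) ℂ) : Fin N → ℝ :=
  fun k =>
    (Matrix.isHermitian_mul_conjTranspose_self A).eigenvalues
      (Tuple.sort (fun i => -(Matrix.isHermitian_mul_conjTranspose_self A).eigenvalues i) k)

/-- The decreasingly ordered singular values `σ_1(A) ≥ ⋯ ≥ σ_N(A)` of a complex matrix `A`,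
i.e. the decreasingly ordered nonnegative square roots of the eigenvalues of `A * Aᴴ`.
Here `svalsDesc A k` is `σ_{k+1}(A)` (indices are 0-based). -/
noncomputable def svalsDesc {N : ℕ} (A : Matrix (Fin N) (Fin N) ℂ) : Fin N → ℝ :=
  fun k => Real.sqrt (evalsDesc A k)

open Finset in
lemma perm_sum_le {N : ℕ} (a b a' b' : Fin N → ℝ) (ha' : Antitone a') (hb' : Antitone b')
    (pa pb : Equiv.Perm (Fin N)) (hpa : ∀ k, a' k = a (pa k)) (hpb : ∀ k, b' k = b (pb k))
    (π : Equiv.Perm (Fin N)) : ∑ i, a i * b (π i) ≤ ∑ k, a' k * b' k := by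
  have hmono : Monovary a' b' := by
    intro i j h
    have hji : j ≤ i := by
      by_contra h'
      push_neg at h'
      exact absurd h (not_lt.2 (hb' h'.le))
    exact ha' hji
  have := hmono.sum_mul_comp_perm_le_sum_mul (σ := (pa.trans π).trans pb.symm)
  calc ∑ i, a i * b (π i) = ∑ k, a (pa k) * b (π (pa k)) := (Equiv.sum_comp pa _).symm
    _ = ∑ k, a' k * b' (((pa.trans π).trans pb.symm) k) := by
        refine Finset.sum_congr rfl fun k _ => ?_
        rw [hpa, hpb]
        simp
    _ ≤ ∑ k, a' k * b' k := this

open Finset in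
lemma ds_bound {N : ℕ} (a b a' b' : Fin N → ℝ) (ha' : Antitone a') (hb' : Antitone b')
    (pa pb : Equiv.Perm (Fin N)) (hpa : ∀ k, a' k = a (pa k)) (hpb : ∀ k, b' k = b (pb k))
    (S : Matrix (Fin N) (Fin N) ℝ) (hS : S ∈ doublyStochastic ℝ (Fin N)) :
    ∑ i, ∑ j, a i * b j * S i j ≤ ∑ k, a' k * b' k := by
  obtain ⟨w, hw0, hw1, hwS⟩ := exists_eq_sum_perm_of_mem_doublyStochastic hS
  have hperm : ∀ π : Equiv.Perm (Fin N),
      ∑ i, ∑ j, a i * b j * (π.permMatrix ℝ) i j = ∑ i, a i * b (π i) := by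
    intro π
    refine Finset.sum_congr rfl fun i _ => ?_
    rw [Finset.sum_eq_single (π i)]
    · simp [Equiv.Perm.permMatrix, PEquiv.toMatrix, Equiv.toPEquiv]
    · intro j _ hj
      simp [Equiv.Perm.permMatrix, PEquiv.toMatrix, Equiv.toPEquiv, hj.symm]
    · simp
  have key : ∀ i j, a i * b j * S i j
      = ∑ π : Equiv.Perm (Fin N), w π * (a i * b j * (π.permMatrix ℝ) i j) := by
    intro i j
    rw [← hwS, Matrix.sum_apply, Finset.mul_sum]
    exact Finset.sum_congr rfl fun π _ => by
      simp only [Matrix.smul_apply, smul_eq_mul]; ring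
  calc ∑ i, ∑ j, a i * b j * S i j
      = ∑ π : Equiv.Perm (Fin N), w π * ∑ i, a i * b (π i) := by
        simp only [key]
        have h1 : ∑ i, ∑ j, ∑ π : Equiv.Perm (Fin N), w π * (a i * b j * (π.permMatrix ℝ) i j)
            = ∑ i, ∑ π : Equiv.Perm (Fin N), ∑ j, w π * (a i * b j * (π.permMatrix ℝ) i j) :=
          Finset.sum_congr rfl fun i _ => Finset.sum_comm (s := univ) (t := univ)
            (f := fun j π => w π * (a i * b j * (π.permMatrix ℝ) i j))
        rw [h1, Finset.sum_comm (s := univ) (t := univ)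
          (f := fun i π => ∑ j, w π * (a i * b j * (π.permMatrix ℝ) i j))]
        refine Finset.sum_congr rfl fun π _ => ?_
        rw [← hperm π, Finset.mul_sum]
        exact Finset.sum_congr rfl fun i _ => by rw [Finset.mul_sum]
    _ ≤ ∑ π : Equiv.Perm (Fin N), w π * ∑ k, a' k * b' k := by
        refine Finset.sum_le_sum fun π _ => mul_le_mul_of_nonneg_left ?_ (hw0 π)
        exact perm_sum_le a b a' b' ha' hb' pa pb hpa hpb π
    _ = ∑ k, a' k * b' k := by rw [← Finset.sum_mul, hw1, one_mul]


noncomputable def svals {N : ℕ} (A : Matrix (Fin N) (Fin N) ℂ) : Fin N → ℝ :=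
  fun i => Real.sqrt ((Matrix.isHermitian_mul_conjTranspose_self A).eigenvalues i)

lemma svals_nonneg {N : ℕ} (A : Matrix (Fin N) (Fin N) ℂ) (i : Fin N) : 0 ≤ svals A i :=
  Real.sqrt_nonneg _

lemma sq_svals {N : ℕ} (A : Matrix (Fin N) (Fin N) ℂ) (i : Fin N) :
    svals A i ^ 2 = (Matrix.isHermitian_mul_conjTranspose_self A).eigenvalues i :=
  Real.sq_sqrt (Matrix.eigenvalues_self_mul_conjTranspose_nonneg A i)

lemma exists_svd {N : ℕ} (A : Matrix (Fin N) (Fin N) ℂ) :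
    ∃ U V : Matrix (Fin N) (Fin N) ℂ, U ∈ Matrix.unitaryGroup (Fin N) ℂ ∧
      V ∈ Matrix.unitaryGroup (Fin N) ℂ ∧
      A = U * Matrix.diagonal (fun i => (svals A i : ℂ)) * V := by
  classical
  have hA := Matrix.isHermitian_mul_conjTranspose_self A
  set U : Matrix (Fin N) (Fin N) ℂ := (hA.eigenvectorUnitary : Matrix (Fin N) (Fin N) ℂ)
    with hUdef
  have hU : U ∈ Matrix.unitaryGroup (Fin N) ℂ := (hA.eigenvectorUnitary).2
  set W : Matrix (Fin N) (Fin N) ℂ := star U * A with hWdef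
  have hWW : W * Wᴴ = Matrix.diagonal (fun i => (hA.eigenvalues i : ℂ)) := by
    have h1 : W * Wᴴ = star U * (A * Aᴴ) * U := by
      have h2 : (star U)ᴴ = U := by simp [Matrix.star_eq_conjTranspose]
      rw [hWdef, conjTranspose_mul, h2]
      noncomm_ring
    rw [h1]
    have h3 := hA.conjStarAlgAut_star_eigenvectorUnitary
    rw [Unitary.conjStarAlgAut_apply, Unitary.coe_star, star_star] at h3
    rw [hUdef, h3]
    rfl
  have hent : ∀ i j, ∑ k, W i k * star (W j k)
      = if i = j then ((hA.eigenvalues i : ℝ) : ℂ) else 0 := by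
    intro i j
    have h := congrFun (congrFun hWW i) j
    simpa [Matrix.mul_apply, Matrix.conjTranspose_apply, Matrix.diagonal_apply] using h
  have hconj : ∀ i j, ∑ k, star (W i k) * W j k
      = if i = j then ((hA.eigenvalues i : ℝ) : ℂ) else 0 := by
    intro i j
    have h := congrArg star (hent i j)
    rw [star_sum] at h
    have h2 : ∀ k, star (W i k * star (W j k)) = star (W i k) * W j k := by
      intro k; simp only [StarMul.star_mul, star_star]; ring
    simp only [h2] at h
    rw [h]
    split <;> simp
  have hsum : ∀ i, ∑ k, Complex.normSq (W i k) = hA.eigenvalues i := by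
    intro i
    have h := hent i i
    rw [if_pos rfl] at h
    have h2 : ∀ k, W i k * star (W i k) = ((Complex.normSq (W i k) : ℝ) : ℂ) := by
      intro k; exact Complex.mul_conj (W i k)
    rw [Finset.sum_congr rfl fun k _ => h2 k, ← Complex.ofReal_sum] at h
    exact_mod_cast h
  have hW0 : ∀ i, svals A i = 0 → ∀ k, W i k = 0 := by
    intro i hi k
    have hlam0 : hA.eigenvalues i = 0 := by
      have hnn := Matrix.eigenvalues_self_mul_conjTranspose_nonneg A i
      have h2 := Real.sqrt_eq_zero'.1 hi
      linarith
    have := hsum i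
    rw [hlam0] at this
    have hz := (Finset.sum_eq_zero_iff_of_nonneg
      (fun k _ => Complex.normSq_nonneg (W i k))).1 this k (Finset.mem_univ k)
    exact Complex.normSq_eq_zero.1 hz
  -- the candidate orthonormal rows
  set st : Set (Fin N) := {i | svals A i ≠ 0} with hstdef
  set v : Fin N → EuclideanSpace ℂ (Fin N) :=
    fun i => ((svals A i : ℂ))⁻¹ • ((WithLp.equiv 2 (Fin N → ℂ)).symm (W i)) with hvdef
  have hvk : ∀ i k, v i k = (svals A i : ℂ)⁻¹ * W i k := by
    intro i k; rfl
  have horth : Orthonormal ℂ (st.restrict v) := by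
    rw [orthonormal_iff_ite]
    rintro ⟨i, hi⟩ ⟨j, hj⟩
    have hinner : (inner ℂ (v i) (v j) : ℂ)
        = (svals A i : ℂ)⁻¹ * ((svals A j : ℂ)⁻¹ * ∑ k, star (W i k) * W j k) := by
      rw [PiLp.inner_apply, Finset.mul_sum, Finset.mul_sum]
      refine Finset.sum_congr rfl fun k _ => ?_
      simp only [RCLike.inner_apply, hvk, _root_.map_mul, map_inv₀, Complex.conj_ofReal,
        Complex.star_def]
      ring
    change inner ℂ (v i) (v j) = _
    simp only [Set.restrict_apply, hinner, hconj i j]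
    by_cases hij : i = j
    · subst hij
      simp only [if_pos rfl, Subtype.mk_eq_mk, ↓reduceIte]
      have h2 : ((hA.eigenvalues i : ℝ) : ℂ) = ((svals A i : ℂ)) * ((svals A i : ℂ)) := by
        rw [← Complex.ofReal_mul, ← pow_two, sq_svals]
      rw [h2]
      have hs : (svals A i : ℂ) ≠ 0 := by
        simpa [hstdef] using hi
      field_simp
    · simp [hij, Subtype.mk_eq_mk]
  have hcard : Module.finrank ℂ (EuclideanSpace ℂ (Fin N)) = Fintype.card (Fin N) := by
    simp
  obtain ⟨b, hb⟩ := horth.exists_orthonormalBasis_extension_of_card_eq hcard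
  set V : Matrix (Fin N) (Fin N) ℂ := Matrix.of (fun i k => b i k) with hVdef
  have hV : V ∈ Matrix.unitaryGroup (Fin N) ℂ := by
    rw [Matrix.mem_unitaryGroup_iff]
    ext i j
    have hb2 := orthonormal_iff_ite.1 b.orthonormal j i
    rw [PiLp.inner_apply] at hb2
    simp only [RCLike.inner_apply] at hb2
    have : (V * star V) i j = ∑ k, b i k * star (b j k) := by
      simp [Matrix.mul_apply, Matrix.star_eq_conjTranspose, Matrix.conjTranspose_apply, hVdef]
    rw [this]
    have h3 : ∑ k, b i k * star (b j k) = ∑ k, b i k * (starRingEnd ℂ) (b j k) := by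
      refine Finset.sum_congr rfl fun k _ => ?_
      rfl
    rw [h3, hb2]
    by_cases hij : i = j
    · subst hij; simp
    · rw [if_neg (fun h => hij h.symm)]
      simp [Matrix.one_apply, hij]
  have hWV : W = Matrix.diagonal (fun i => (svals A i : ℂ)) * V := by
    ext i k
    rw [Matrix.diagonal_mul]
    by_cases h : svals A i = 0
    · simp [h, hW0 i h k]
    · have hmem : i ∈ st := h
      have : V i k = v i k := by rw [hVdef]; simp [hb i hmem]
      rw [this, hvk]
      have hs : (svals A i : ℂ) ≠ 0 := by simpa using h
      field_simp
  refine ⟨U, V, hU, hV, ?_⟩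
  rw [mul_assoc, ← hWV, hWdef, ← mul_assoc, Matrix.mem_unitaryGroup_iff.1 hU, one_mul]


lemma unitary_row_sq_sum {N : ℕ} {M : Matrix (Fin N) (Fin N) ℂ}
    (hM : M ∈ Matrix.unitaryGroup (Fin N) ℂ) (i : Fin N) :
    ∑ j, Complex.normSq (M i j) = 1 := by
  have h := congrFun (congrFun (Matrix.mem_unitaryGroup_iff.1 hM) i) i
  have h2 : (M * star M) i i = ∑ j, ((Complex.normSq (M i j) : ℝ) : ℂ) := by
    simp only [Matrix.mul_apply, Matrix.star_eq_conjTranspose, Matrix.conjTranspose_apply]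
    exact Finset.sum_congr rfl fun j _ => Complex.mul_conj (M i j)
  rw [h2] at h
  have h3 : ((1 : Matrix (Fin N) (Fin N) ℂ)) i i = 1 := by simp
  rw [h3, ← Complex.ofReal_sum] at h
  exact_mod_cast h

lemma unitary_col_sq_sum {N : ℕ} {M : Matrix (Fin N) (Fin N) ℂ}
    (hM : M ∈ Matrix.unitaryGroup (Fin N) ℂ) (j : Fin N) :
    ∑ i, Complex.normSq (M i j) = 1 := by
  have h := congrFun (congrFun (Matrix.mem_unitaryGroup_iff'.1 hM) j) j
  have h2 : (star M * M) j j = ∑ i, ((Complex.normSq (M i j) : ℝ) : ℂ) := by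
    simp only [Matrix.mul_apply, Matrix.star_eq_conjTranspose, Matrix.conjTranspose_apply]
    refine Finset.sum_congr rfl fun i _ => ?_
    rw [mul_comm]
    exact Complex.mul_conj (M i j)
  rw [h2] at h
  have h3 : ((1 : Matrix (Fin N) (Fin N) ℂ)) j j = 1 := by simp
  rw [h3, ← Complex.ofReal_sum] at h
  exact_mod_cast h

lemma trace_diag_mul {N : ℕ} (a b : Fin N → ℝ) (P Q : Matrix (Fin N) (Fin N) ℂ) :
    (Matrix.diagonal (fun i => (a i : ℂ)) * P * (Matrix.diagonal (fun i => (b i : ℂ)) * Q)).trace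
      = ∑ i, ∑ j, (a i : ℂ) * P i j * ((b j : ℂ) * Q j i) := by
  calc (Matrix.diagonal (fun i => (a i : ℂ)) * P * (Matrix.diagonal (fun i => (b i : ℂ)) * Q)).trace
      = ∑ i, ∑ j, (Matrix.diagonal (fun i => (a i : ℂ)) * P) i j
          * (Matrix.diagonal (fun i => (b i : ℂ)) * Q) j i := by
        simp [Matrix.trace, Matrix.mul_apply]
    _ = ∑ i, ∑ j, (a i : ℂ) * P i j * ((b j : ℂ) * Q j i) := by
        simp [Matrix.diagonal_mul]


/-- The sorting permutation for `A`. -/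
noncomputable def sortPerm {N : ℕ} (A : Matrix (Fin N) (Fin N) ℂ) : Equiv.Perm (Fin N) :=
  Tuple.sort (fun i => -(Matrix.isHermitian_mul_conjTranspose_self A).eigenvalues i)

lemma svalsDesc_eq {N : ℕ} (A : Matrix (Fin N) (Fin N) ℂ) (k : Fin N) :
    svalsDesc A k = svals A (sortPerm A k) := rfl

lemma evalsDesc_antitone {N : ℕ} (A : Matrix (Fin N) (Fin N) ℂ) : Antitone (evalsDesc A) := by
  intro k l hkl
  have h := Tuple.monotone_sort
    (fun i => -(Matrix.isHermitian_mul_conjTranspose_self A).eigenvalues i) hkl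
  simp only [Function.comp_apply] at h
  have : -(evalsDesc A k) ≤ -(evalsDesc A l) := h
  linarith

lemma svalsDesc_antitone {N : ℕ} (A : Matrix (Fin N) (Fin N) ℂ) : Antitone (svalsDesc A) :=
  fun k l hkl => Real.sqrt_le_sqrt (evalsDesc_antitone A hkl)

lemma re_trace_le {N : ℕ} (A B : Matrix (Fin N) (Fin N) ℂ) :
    ((A * Bᴴ).trace).re ≤ ∑ k, svalsDesc A k * svalsDesc B k := by
  obtain ⟨Ua, Va, hUa, hVa, hhA⟩ := exists_svd A
  obtain ⟨Ub, Vb, hUb, hVb, hhB⟩ := exists_svd B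
  set a : Fin N → ℝ := svals A with hadef
  set b : Fin N → ℝ := svals B with hbdef
  set Da : Matrix (Fin N) (Fin N) ℂ := Matrix.diagonal (fun i => (a i : ℂ)) with hDa
  set Db : Matrix (Fin N) (Fin N) ℂ := Matrix.diagonal (fun i => (b i : ℂ)) with hDb
  set P : Matrix (Fin N) (Fin N) ℂ := Va * Vbᴴ with hP
  set Q : Matrix (Fin N) (Fin N) ℂ := Ubᴴ * Ua with hQ
  have hPu : P ∈ Matrix.unitaryGroup (Fin N) ℂ :=
    mul_mem hVa (by simpa [Matrix.star_eq_conjTranspose] using Unitary.star_mem hVb)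
  have hQu : Q ∈ Matrix.unitaryGroup (Fin N) ℂ :=
    mul_mem (by simpa [Matrix.star_eq_conjTranspose] using Unitary.star_mem hUb) hUa
  have hBH : Bᴴ = Vbᴴ * Db * Ubᴴ := by
    rw [hhB]
    rw [conjTranspose_mul, conjTranspose_mul, Matrix.diagonal_conjTranspose]
    have : star (fun i => ((b i : ℝ) : ℂ)) = fun i => ((b i : ℝ) : ℂ) := by
      funext i
      simp [Complex.star_def, Complex.conj_ofReal]
    rw [this]
    noncomm_ring
  have h1 : A * Bᴴ = Ua * (Da * P * (Db * Ubᴴ)) := by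
    rw [hhA, hBH, hP]
    noncomm_ring
  have h2 : (A * Bᴴ).trace = (Da * P * (Db * Q)).trace := by
    rw [h1, Matrix.trace_mul_comm]
    congr 1
    rw [hQ]
    noncomm_ring
  rw [h2, trace_diag_mul]
  have hre : ((∑ i, ∑ j, (a i : ℂ) * P i j * ((b j : ℂ) * Q j i)).re)
      = ∑ i, ∑ j, ((a i : ℂ) * P i j * ((b j : ℂ) * Q j i)).re := by
    rw [Complex.re_sum]
    exact Finset.sum_congr rfl fun i _ => Complex.re_sum _ _
  rw [hre]
  have key : ∀ i j, ((a i : ℂ) * P i j * ((b j : ℂ) * Q j i)).re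
      ≤ (1/2) * (a i * b j * Complex.normSq (P i j))
        + (1/2) * (a i * b j * Complex.normSq (Q j i)) := by
    intro i j
    have h3 : ((a i : ℂ) * P i j * ((b j : ℂ) * Q j i)).re
        ≤ ‖(a i : ℂ) * P i j * ((b j : ℂ) * Q j i)‖ := Complex.re_le_norm _
    have h4 : ‖(a i : ℂ) * P i j * ((b j : ℂ) * Q j i)‖
        = a i * b j * (‖P i j‖ * ‖Q j i‖) := by
      simp only [norm_mul, Complex.norm_real, Real.norm_eq_abs]
      rw [abs_of_nonneg (svals_nonneg A i), abs_of_nonneg (svals_nonneg B j)]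
      ring
    have h5 : ‖P i j‖ * ‖Q j i‖ ≤ (Complex.normSq (P i j) + Complex.normSq (Q j i)) / 2 := by
      simp only [Complex.normSq_eq_norm_sq]
      nlinarith [sq_nonneg (‖P i j‖ - ‖Q j i‖)]
    have h6 : a i * b j * (‖P i j‖ * ‖Q j i‖)
        ≤ a i * b j * ((Complex.normSq (P i j) + Complex.normSq (Q j i)) / 2) := by
      apply mul_le_mul_of_nonneg_left h5
      exact mul_nonneg (svals_nonneg A i) (svals_nonneg B j)
    calc ((a i : ℂ) * P i j * ((b j : ℂ) * Q j i)).re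
        ≤ a i * b j * (‖P i j‖ * ‖Q j i‖) := h4 ▸ h3
      _ ≤ a i * b j * ((Complex.normSq (P i j) + Complex.normSq (Q j i)) / 2) := h6
      _ = (1/2) * (a i * b j * Complex.normSq (P i j))
          + (1/2) * (a i * b j * Complex.normSq (Q j i)) := by ring
  have hS1 : (Matrix.of fun i j => Complex.normSq (P i j)) ∈ doublyStochastic ℝ (Fin N) := by
    rw [mem_doublyStochastic_iff_sum]
    exact ⟨fun i j => Complex.normSq_nonneg _,
      fun i => unitary_row_sq_sum hPu i, fun j => unitary_col_sq_sum hPu j⟩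
  have hS2 : (Matrix.of fun i j => Complex.normSq (Q j i)) ∈ doublyStochastic ℝ (Fin N) := by
    rw [mem_doublyStochastic_iff_sum]
    exact ⟨fun i j => Complex.normSq_nonneg _,
      fun i => unitary_col_sq_sum hQu i, fun j => unitary_row_sq_sum hQu j⟩
  have hds1 : ∑ i, ∑ j, a i * b j * Complex.normSq (P i j)
      ≤ ∑ k, svalsDesc A k * svalsDesc B k :=
    ds_bound a b (svalsDesc A) (svalsDesc B) (svalsDesc_antitone A) (svalsDesc_antitone B)
      (sortPerm A) (sortPerm B) (fun k => rfl) (fun k => rfl) _ hS1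
  have hds2 : ∑ i, ∑ j, a i * b j * Complex.normSq (Q j i)
      ≤ ∑ k, svalsDesc A k * svalsDesc B k :=
    ds_bound a b (svalsDesc A) (svalsDesc B) (svalsDesc_antitone A) (svalsDesc_antitone B)
      (sortPerm A) (sortPerm B) (fun k => rfl) (fun k => rfl) _ hS2
  calc ∑ i, ∑ j, ((a i : ℂ) * P i j * ((b j : ℂ) * Q j i)).re
      ≤ ∑ i, ∑ j, ((1/2) * (a i * b j * Complex.normSq (P i j))
          + (1/2) * (a i * b j * Complex.normSq (Q j i))) :=
        Finset.sum_le_sum fun i _ => Finset.sum_le_sum fun j _ => key i j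
    _ = (1/2) * (∑ i, ∑ j, a i * b j * Complex.normSq (P i j))
          + (1/2) * (∑ i, ∑ j, a i * b j * Complex.normSq (Q j i)) := by
        simp only [Finset.sum_add_distrib, Finset.mul_sum]
    _ ≤ (1/2) * (∑ k, svalsDesc A k * svalsDesc B k)
          + (1/2) * (∑ k, svalsDesc A k * svalsDesc B k) := by
        have := hds1; have := hds2; nlinarith [hds1, hds2]
    _ = ∑ k, svalsDesc A k * svalsDesc B k := by ring

lemma sum_sq_svalsDesc {N : ℕ} (A : Matrix (Fin N) (Fin N) ℂ) :
    ∑ k, (svalsDesc A k) ^ 2 = ((A * Aᴴ).trace).re := by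
  have htr : (A * Aᴴ).trace
      = ∑ i, ((Matrix.isHermitian_mul_conjTranspose_self A).eigenvalues i : ℂ) := by
    have hA := Matrix.isHermitian_mul_conjTranspose_self A
    conv_lhs => rw [hA.spectral_theorem]
    rw [Unitary.conjStarAlgAut_apply, Matrix.trace_mul_cycle]
    simp [Matrix.trace_diagonal, Function.comp]
  have h2 : ∑ k, (svalsDesc A k) ^ 2
      = ∑ i, (Matrix.isHermitian_mul_conjTranspose_self A).eigenvalues i := by
    rw [← Equiv.sum_comp (sortPerm A)
      (fun i => (Matrix.isHermitian_mul_conjTranspose_self A).eigenvalues i)]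
    refine Finset.sum_congr rfl fun k _ => ?_
    rw [svalsDesc_eq, sq_svals]
  rw [h2, htr, ← Complex.ofReal_sum]
  simp

/-- For `A, B ∈ M_N(ℂ)`,
`Σ_{k=1}^N |σ_k(A) − σ_k(B)| ≤ √(N · tr((A−B)(A−B)*))`. -/
theorem singularValue_diff_sum_le {N : ℕ} (A B : Matrix (Fin N) (Fin N) ℂ) :
    ∑ k : Fin N, |svalsDesc A k - svalsDesc B k|
      ≤ Real.sqrt ((N : ℝ) * (Matrix.trace ((A - B) * (A - B)ᴴ)).re) := by
  have hsq : ∑ k, (svalsDesc A k - svalsDesc B k) ^ 2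
      ≤ ((( A - B) * (A - B)ᴴ).trace).re := by
    have hexp : (A - B) * (A - B)ᴴ = A * Aᴴ - A * Bᴴ - B * Aᴴ + B * Bᴴ := by
      rw [Matrix.conjTranspose_sub]
      noncomm_ring
    have htr : (((A - B) * (A - B)ᴴ).trace).re
        = ((A * Aᴴ).trace).re - 2 * ((A * Bᴴ).trace).re + ((B * Bᴴ).trace).re := by
      rw [hexp]
      have hBA : ((B * Aᴴ).trace).re = ((A * Bᴴ).trace).re := by
        have : B * Aᴴ = (A * Bᴴ)ᴴ := by
          rw [conjTranspose_mul, conjTranspose_conjTranspose]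
        rw [this, Matrix.trace_conjTranspose]
        simp [Complex.star_def]
      simp only [Matrix.trace_add, Matrix.trace_sub, Complex.add_re, Complex.sub_re]
      rw [hBA]
      ring
    have hsum : ∑ k, (svalsDesc A k - svalsDesc B k) ^ 2
        = ∑ k, (svalsDesc A k) ^ 2 + ∑ k, (svalsDesc B k) ^ 2
          - 2 * ∑ k, svalsDesc A k * svalsDesc B k := by
      rw [← Finset.sum_add_distrib, Finset.mul_sum, ← Finset.sum_sub_distrib]
      exact Finset.sum_congr rfl fun k _ => by ring
    rw [hsum, htr, sum_sq_svalsDesc A, sum_sq_svalsDesc B]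
    have := re_trace_le A B
    linarith
  have habs : ∑ k : Fin N, |svalsDesc A k - svalsDesc B k| ≥ 0 :=
    Finset.sum_nonneg fun k _ => abs_nonneg _
  have htrnn : 0 ≤ (((A - B) * (A - B)ᴴ).trace).re := by
    rw [← sum_sq_svalsDesc (A - B)]
    exact Finset.sum_nonneg fun k _ => sq_nonneg _
  rw [Real.le_sqrt habs]
  calc (∑ k : Fin N, |svalsDesc A k - svalsDesc B k|) ^ 2
      ≤ (Finset.univ : Finset (Fin N)).card * ∑ k, |svalsDesc A k - svalsDesc B k| ^ 2 :=
        sq_sum_le_card_mul_sum_sq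
    _ = (N : ℝ) * ∑ k, (svalsDesc A k - svalsDesc B k) ^ 2 := by
        simp [sq_abs]
    _ ≤ (N : ℝ) * (((A - B) * (A - B)ᴴ).trace).re := by
        apply mul_le_mul_of_nonneg_left hsq
        exact Nat.cast_nonneg N
  exact mul_nonneg (Nat.cast_nonneg N) htrnn
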